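/- arXiv:2305.06797 — 2 statements merged into one kernel-verified Lean document; each statement's English description precedes it below -/
import Mathlib

section
/- For every α, β ∈ [0,n), j ∈ ℕ₀, every nonnegative measurable f on (0,∞), and every t ∈ (0,∞): (R_β ∘ R_α^j) f(t) = (φ_β(t)/j!) ∫_0^t f(s) (∫_s^t φ_α)^j ds, and (H_α^j ∘ H_β) f(t) = (1/j!) ∫_t^∞ f(s) φ_β(s) (∫_t^s φ_α)^j ds. -/
open MeasureTheory Set Real
open scoped ENNReal

noncomputable def phi (n : ℕ) (γ : ℝ) (t : ℝ) : ℝ := min (t ^ (-1 + γ / n)) t⁻¹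

noncomputable def Rop (n : ℕ) (γ : ℝ) (f : ℝ → ℝ≥0∞) (t : ℝ) : ℝ≥0∞ :=
  ENNReal.ofReal (phi n γ t) * ∫⁻ s in Set.Ioo (0 : ℝ) t, f s

noncomputable def Hop (n : ℕ) (γ : ℝ) (f : ℝ → ℝ≥0∞) (t : ℝ) : ℝ≥0∞ :=
  ∫⁻ s in Set.Ioi t, f s * ENNReal.ofReal (phi n γ s)

lemma phi_meas (n : ℕ) (γ : ℝ) : Measurable (phi n γ) := by
  unfold phi; fun_prop

lemma phi_contOn (n : ℕ) (γ : ℝ) : ContinuousOn (phi n γ) (Ioi 0) := fun x hx =>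
  ((continuousOn_id.rpow_const fun _ hy => Or.inl (ne_of_gt hy)) x hx).min
    ((continuousOn_id.inv₀ fun _ hy => ne_of_gt hy) x hx)

lemma phi_nonneg (n : ℕ) (γ : ℝ) {s : ℝ} (hs : 0 < s) : 0 ≤ phi n γ s :=
  le_min (Real.rpow_nonneg hs.le _) (inv_nonneg.2 hs.le)

lemma phi_intOn (n : ℕ) (γ : ℝ) {a : ℝ} (b : ℝ) (ha : 0 < a) :
    IntegrableOn (phi n γ) (Ioo a b) volume := by
  rcases le_or_gt b a with h | h
  · rw [Ioo_eq_empty (fun h' => absurd h (not_le.2 h'))]; simp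
  · apply (IntegrableOn.mono_set · Ioo_subset_Icc_self)
    apply ContinuousOn.integrableOn_Icc
    exact (phi_contOn n γ).mono (fun x hx => lt_of_lt_of_le ha hx.1)

lemma intOo_nonneg (n : ℕ) (γ : ℝ) {s : ℝ} (t : ℝ) (hs : 0 < s) :
    0 ≤ ∫ x in Ioo s t, phi n γ x :=
  setIntegral_nonneg measurableSet_Ioo fun x hx => phi_nonneg n γ (hs.trans hx.1)

lemma ftc_real (n : ℕ) (γ : ℝ) (j : ℕ) {u t : ℝ} (hu : 0 < u) (hut : u < t) :
    IntegrableOn (fun s => phi n γ s * (∫ x in Ioo s t, phi n γ x) ^ j) (Ioo u t) volume ∧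
    ∫ s in Ioo u t, phi n γ s * (∫ x in Ioo s t, phi n γ x) ^ j
      = (∫ x in Ioo u t, phi n γ x) ^ (j + 1) / ((j + 1 : ℕ) : ℝ) := by
  set Φ : ℝ → ℝ := fun s => ∫ x in s..t, phi n γ x with hΦdef
  have hIoo : ∀ s, s ≤ t → (∫ x in Ioo s t, phi n γ x) = Φ s := by
    intro s hs
    show _ = ∫ x in s..t, phi n γ x
    rw [intervalIntegral.integral_of_le hs, integral_Ioc_eq_integral_Ioo]
  have PhiDeriv : ∀ s ∈ Icc u t, HasDerivAt Φ (-(phi n γ s)) s := by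
    intro s hs
    have hs0 : 0 < s := lt_of_lt_of_le hu hs.1
    have hsub : uIcc t s ⊆ Ioi 0 := by
      rw [uIcc_of_ge hs.2]; exact fun x hx => hs0.trans_le hx.1
    have hint : IntervalIntegrable (phi n γ) volume t s :=
      ContinuousOn.intervalIntegrable ((phi_contOn n γ).mono hsub)
    have hmeas : StronglyMeasurableAtFilter (phi n γ) (nhds s) volume :=
      ⟨Set.univ, Filter.univ_mem, (phi_meas n γ).aestronglyMeasurable.restrict⟩
    have hca : ContinuousAt (phi n γ) s :=
      (phi_contOn n γ).continuousAt (Ioi_mem_nhds hs0)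
    have h1 := (intervalIntegral.integral_hasDerivAt_right hint hmeas hca).neg
    have h2 : Φ = fun y => -∫ x in t..y, phi n γ x :=
      funext fun y => intervalIntegral.integral_symm t y
    rw [h2]; exact h1
  have PhiCont : ContinuousOn Φ (Icc u t) := fun s hs =>
    ((PhiDeriv s hs).continuousAt).continuousWithinAt
  have hIccsub : Icc u t ⊆ Ioi 0 := fun x hx => hu.trans_le hx.1
  have hcont : ContinuousOn (fun s => phi n γ s * Φ s ^ j) (Icc u t) :=
    ((phi_contOn n γ).mono hIccsub).mul (PhiCont.pow j)
  have hEq : EqOn (fun s => phi n γ s * Φ s ^ j)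
      (fun s => phi n γ s * (∫ x in Ioo s t, phi n γ x) ^ j) (Ioo u t) := by
    intro s hs; simp only [hIoo s hs.2.le]
  have hInt : IntegrableOn (fun s => phi n γ s * (∫ x in Ioo s t, phi n γ x) ^ j)
      (Ioo u t) volume :=
    ((hcont.integrableOn_Icc).mono_set Ioo_subset_Icc_self).congr_fun hEq measurableSet_Ioo
  refine ⟨hInt, ?_⟩
  have hF : ∀ s ∈ uIcc u t,
      HasDerivAt (fun y => -(Φ y ^ (j + 1) / ((j + 1 : ℕ) : ℝ)))
        (phi n γ s * Φ s ^ j) s := by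
    intro s hs
    rw [uIcc_of_le hut.le] at hs
    have : HasDerivAt (fun y => -(Φ y ^ (j + 1) / ((j + 1 : ℕ) : ℝ)))
        (-(((j + 1 : ℕ) : ℝ) * Φ s ^ (j + 1 - 1) * -phi n γ s / ((j + 1 : ℕ) : ℝ))) s :=
      (((PhiDeriv s hs).pow (j + 1)).div_const ((j + 1 : ℕ) : ℝ)).neg
    convert this using 1
    have hj : ((j + 1 : ℕ) : ℝ) ≠ 0 := by positivity
    field_simp
    rw [Nat.add_sub_cancel]
  have hII : IntervalIntegrable (fun s => phi n γ s * Φ s ^ j) volume u t := by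
    apply ContinuousOn.intervalIntegrable
    rwa [uIcc_of_le hut.le]
  have hFTC := intervalIntegral.integral_eq_sub_of_hasDerivAt hF hII
  have hPhit : Φ t = 0 := intervalIntegral.integral_same
  rw [hPhit] at hFTC
  have : ∫ s in Ioo u t, phi n γ s * (∫ x in Ioo s t, phi n γ x) ^ j
      = ∫ s in u..t, phi n γ s * Φ s ^ j := by
    rw [intervalIntegral.integral_of_le hut.le, integral_Ioc_eq_integral_Ioo]
    exact (setIntegral_congr_fun measurableSet_Ioo hEq).symm
  rw [this, hFTC, hIoo u hut.le]
  simp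

lemma Lconv (n : ℕ) (γ : ℝ) {s : ℝ} (t : ℝ) (hs : 0 < s) :
    (∫⁻ x in Ioo s t, ENNReal.ofReal (phi n γ x)) =
      ENNReal.ofReal (∫ x in Ioo s t, phi n γ x) := by
  refine (MeasureTheory.ofReal_integral_eq_lintegral_ofReal (phi_intOn n γ t hs) ?_).symm
  filter_upwards [ae_restrict_mem measurableSet_Ioo] with x hx
  exact phi_nonneg n γ (hs.trans hx.1)

lemma key_lint (n : ℕ) (γ : ℝ) (j : ℕ) {u t : ℝ} (hu : 0 < u) (hut : u < t) :
    ∫⁻ s in Ioo u t,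
        ENNReal.ofReal (phi n γ s) * (∫⁻ x in Ioo s t, ENNReal.ofReal (phi n γ x)) ^ j
      = (∫⁻ x in Ioo u t, ENNReal.ofReal (phi n γ x)) ^ (j + 1) * (((j + 1 : ℕ) : ℝ≥0∞))⁻¹ := by
  obtain ⟨hInt, hval⟩ := ftc_real n γ j hu hut
  have h1 : ∫⁻ s in Ioo u t,
      ENNReal.ofReal (phi n γ s) * (∫⁻ x in Ioo s t, ENNReal.ofReal (phi n γ x)) ^ j
      = ∫⁻ s in Ioo u t,
        ENNReal.ofReal (phi n γ s * (∫ x in Ioo s t, phi n γ x) ^ j) := by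
    refine setLIntegral_congr_fun measurableSet_Ioo ?_
    intro s hs
    beta_reduce
    rw [Lconv n γ t (hu.trans hs.1), ← ENNReal.ofReal_pow (intOo_nonneg n γ t (hu.trans hs.1)),
      ← ENNReal.ofReal_mul (phi_nonneg n γ (hu.trans hs.1))]
  rw [h1]
  have h2 : (∫⁻ s in Ioo u t, ENNReal.ofReal (phi n γ s * (∫ x in Ioo s t, phi n γ x) ^ j))
      = ENNReal.ofReal (∫ s in Ioo u t, phi n γ s * (∫ x in Ioo s t, phi n γ x) ^ j) := by
    refine (MeasureTheory.ofReal_integral_eq_lintegral_ofReal hInt ?_).symm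
    filter_upwards [ae_restrict_mem measurableSet_Ioo] with x hx
    exact mul_nonneg (phi_nonneg n γ (hu.trans hx.1))
      (pow_nonneg (intOo_nonneg n γ t (hu.trans hx.1)) j)
  rw [h2, hval, div_eq_mul_inv, ENNReal.ofReal_mul (pow_nonneg (intOo_nonneg n γ t hu) _),
    ENNReal.ofReal_pow (intOo_nonneg n γ t hu), Lconv n γ t hu,
    ENNReal.ofReal_inv_of_pos (by positivity), ENNReal.ofReal_natCast]

lemma swap_Ioo {t : ℝ} (ht : 0 < t) (F : ℝ → ℝ → ℝ≥0∞)
    (hF : Measurable (Function.uncurry F)) :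
    ∫⁻ s in Ioo 0 t, ∫⁻ u in Ioo 0 s, F s u
      = ∫⁻ u in Ioo 0 t, ∫⁻ s in Ioo u t, F s u := by
  have hGmeas : Measurable (Function.uncurry fun s u => (Iio s).indicator (F s) u) := by
    have : (Function.uncurry fun s u => (Iio s).indicator (F s) u)
        = {p : ℝ × ℝ | p.2 < p.1}.indicator (Function.uncurry F) := by
      ext p
      by_cases h : p.2 < p.1 <;>
        simp [Function.uncurry, Set.indicator_apply, h]
    rw [this]
    exact hF.indicator (measurableSet_lt measurable_snd measurable_fst)
  have h1 : ∫⁻ s in Ioo 0 t, ∫⁻ u in Ioo 0 s, F s u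
      = ∫⁻ s in Ioo 0 t, ∫⁻ u in Ioo 0 t, (Iio s).indicator (F s) u := by
    refine setLIntegral_congr_fun measurableSet_Ioo ?_
    intro s hs
    beta_reduce
    conv_rhs => rw [lintegral_indicator measurableSet_Iio,
      Measure.restrict_restrict measurableSet_Iio]
    have hset : Iio s ∩ Ioo 0 t = Ioo 0 s := by
      ext x
      simp only [mem_inter_iff, mem_Iio, mem_Ioo]
      exact ⟨fun ⟨h1, h2, _⟩ => ⟨h2, h1⟩, fun ⟨h1, h2⟩ => ⟨h2, h1, h2.trans hs.2⟩⟩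
    rw [hset]
  have h2 : ∫⁻ s in Ioo 0 t, ∫⁻ u in Ioo 0 t, (Iio s).indicator (F s) u
      = ∫⁻ u in Ioo 0 t, ∫⁻ s in Ioo 0 t, (Iio s).indicator (F s) u :=
    lintegral_lintegral_swap hGmeas.aemeasurable
  have h3 : ∫⁻ u in Ioo 0 t, ∫⁻ s in Ioo 0 t, (Iio s).indicator (F s) u
      = ∫⁻ u in Ioo 0 t, ∫⁻ s in Ioo u t, F s u := by
    refine setLIntegral_congr_fun measurableSet_Ioo ?_
    intro u hu
    beta_reduce
    have hind : ∀ s : ℝ, (Iio s).indicator (F s) u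
        = (Ioi u).indicator (fun s => F s u) s := by
      intro s
      by_cases h : u < s <;> simp [Set.indicator_apply, h]
    simp only [hind]
    conv_lhs => rw [lintegral_indicator measurableSet_Ioi,
      Measure.restrict_restrict measurableSet_Ioi]
    have hset : Ioi u ∩ Ioo 0 t = Ioo u t := by
      ext x
      simp only [mem_inter_iff, mem_Ioi, mem_Ioo]
      exact ⟨fun ⟨h1, _, h3⟩ => ⟨h1, h3⟩, fun ⟨h1, h2⟩ => ⟨h1, hu.1.trans h1, h2⟩⟩
    rw [hset]
  rw [h1, h2, h3]

lemma swap_Ioi {t : ℝ} (F : ℝ → ℝ → ℝ≥0∞)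
    (hF : Measurable (Function.uncurry F)) :
    ∫⁻ s in Ioi t, ∫⁻ u in Ioi s, F s u
      = ∫⁻ u in Ioi t, ∫⁻ s in Ioo t u, F s u := by
  have hGmeas : Measurable (Function.uncurry fun s u => (Ioi s).indicator (F s) u) := by
    have : (Function.uncurry fun s u => (Ioi s).indicator (F s) u)
        = {p : ℝ × ℝ | p.1 < p.2}.indicator (Function.uncurry F) := by
      ext p
      by_cases h : p.1 < p.2 <;>
        simp [Function.uncurry, Set.indicator_apply, h]
    rw [this]
    exact hF.indicator (measurableSet_lt measurable_fst measurable_snd)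
  have h1 : ∫⁻ s in Ioi t, ∫⁻ u in Ioi s, F s u
      = ∫⁻ s in Ioi t, ∫⁻ u in Ioi t, (Ioi s).indicator (F s) u := by
    refine setLIntegral_congr_fun measurableSet_Ioi ?_
    intro s hs
    beta_reduce
    conv_rhs => rw [lintegral_indicator measurableSet_Ioi,
      Measure.restrict_restrict measurableSet_Ioi]
    have hset : Ioi s ∩ Ioi t = Ioi s := by
      rw [Set.Ioi_inter_Ioi, max_eq_left (le_of_lt hs)]
    rw [hset]
  have h2 : ∫⁻ s in Ioi t, ∫⁻ u in Ioi t, (Ioi s).indicator (F s) u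
      = ∫⁻ u in Ioi t, ∫⁻ s in Ioi t, (Ioi s).indicator (F s) u :=
    lintegral_lintegral_swap hGmeas.aemeasurable
  have h3 : ∫⁻ u in Ioi t, ∫⁻ s in Ioi t, (Ioi s).indicator (F s) u
      = ∫⁻ u in Ioi t, ∫⁻ s in Ioo t u, F s u := by
    refine setLIntegral_congr_fun measurableSet_Ioi ?_
    intro u hu
    beta_reduce
    have hind : ∀ s : ℝ, (Ioi s).indicator (F s) u
        = (Iio u).indicator (fun s => F s u) s := by
      intro s
      by_cases h : s < u <;> simp [Set.indicator_apply, h]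
    simp only [hind]
    conv_lhs => rw [lintegral_indicator measurableSet_Iio,
      Measure.restrict_restrict measurableSet_Iio]
    have hset : Iio u ∩ Ioi t = Ioo t u := by
      ext x
      simp only [mem_inter_iff, mem_Iio, mem_Ioi, mem_Ioo]
      exact ⟨fun ⟨h1, h2⟩ => ⟨h2, h1⟩, fun ⟨h1, h2⟩ => ⟨h2, h1⟩⟩
    rw [hset]
  rw [h1, h2, h3]

lemma L_meas2 (n : ℕ) (γ : ℝ) :
    Measurable fun p : ℝ × ℝ => ∫⁻ x in Ioo p.1 p.2, ENNReal.ofReal (phi n γ x) := by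
  have hm : Measurable (Function.uncurry fun (p : ℝ × ℝ) x =>
      (Ioo p.1 p.2).indicator (fun x => ENNReal.ofReal (phi n γ x)) x) := by
    have huncur : (Function.uncurry fun (p : ℝ × ℝ) x =>
        (Ioo p.1 p.2).indicator (fun x => ENNReal.ofReal (phi n γ x)) x)
        = {q : (ℝ × ℝ) × ℝ | q.1.1 < q.2 ∧ q.2 < q.1.2}.indicator
            (fun q => ENNReal.ofReal (phi n γ q.2)) := by
      ext q
      by_cases h : q.1.1 < q.2 ∧ q.2 < q.1.2 <;>
        simp [Function.uncurry, Set.indicator_apply, Set.mem_Ioo, h]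
    rw [huncur]
    exact (((phi_meas n γ).comp measurable_snd).ennreal_ofReal).indicator
      (((measurableSet_lt (measurable_fst.comp measurable_fst) measurable_snd)).inter
        ((measurableSet_lt measurable_snd (measurable_snd.comp measurable_fst))))
  have h2 := Measurable.lintegral_prod_right (ν := volume) hm
  simp only [lintegral_indicator measurableSet_Ioo] at h2
  exact h2

lemma L_measL (n : ℕ) (γ : ℝ) (t : ℝ) :
    Measurable fun s : ℝ => ∫⁻ x in Ioo s t, ENNReal.ofReal (phi n γ x) :=
  Antitone.measurable fun _ _ hab => lintegral_mono_set (Ioo_subset_Ioo hab le_rfl)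

lemma L_measR (n : ℕ) (γ : ℝ) (t : ℝ) :
    Measurable fun s : ℝ => ∫⁻ x in Ioo t s, ENNReal.ofReal (phi n γ x) :=
  Monotone.measurable fun _ _ hab => lintegral_mono_set (Ioo_subset_Ioo le_rfl hab)

lemma Rop_meas (n : ℕ) (γ : ℝ) (f : ℝ → ℝ≥0∞) : Measurable (Rop n γ f) := by
  apply Measurable.mul ((phi_meas n γ).ennreal_ofReal)
  exact Monotone.measurable fun a b hab => lintegral_mono_set (Ioo_subset_Ioo le_rfl hab)

lemma fact_inv_succ (j : ℕ) :
    ((j.factorial : ℝ≥0∞))⁻¹ * (((j + 1 : ℕ) : ℝ≥0∞))⁻¹ = (((j + 1).factorial : ℝ≥0∞))⁻¹ := by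
  rw [Nat.factorial_succ, Nat.cast_mul, ENNReal.mul_inv
    (Or.inl (Nat.cast_ne_zero.2 (Nat.succ_ne_zero j)))
    (Or.inl (ENNReal.natCast_ne_top _)), mul_comm]

lemma Rrec (n : ℕ) (α β : ℝ) (j : ℕ) :
    ∀ f : ℝ → ℝ≥0∞, Measurable f → ∀ t : ℝ, 0 < t →
    Rop n β ((Rop n α)^[j] f) t
      = ENNReal.ofReal (phi n β t) * ((j.factorial : ℝ≥0∞))⁻¹ *
        ∫⁻ s in Ioo 0 t, f s * (∫⁻ x in Ioo s t, ENNReal.ofReal (phi n α x)) ^ j := by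
  induction j with
  | zero =>
    intro f hf t ht
    simp [Rop, mul_assoc]
  | succ j ih =>
    intro f hf t ht
    rw [Function.iterate_succ_apply, ih (Rop n α f) (Rop_meas n α f) t ht]
    set L : ℝ → ℝ≥0∞ := fun s => ∫⁻ x in Ioo s t, ENNReal.ofReal (phi n α x) with hL
    have hLmeas : Measurable L := L_measL n α t
    have hgmeas : Measurable fun s => ENNReal.ofReal (phi n α s) * L s ^ j :=
      ((phi_meas n α).ennreal_ofReal).mul (hLmeas.pow_const j)
    have stepA : ∫⁻ s in Ioo 0 t, Rop n α f s * L s ^ j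
        = ∫⁻ s in Ioo 0 t, ∫⁻ u in Ioo 0 s,
            (ENNReal.ofReal (phi n α s) * L s ^ j) * f u := by
      refine setLIntegral_congr_fun measurableSet_Ioo ?_
      intro s _
      beta_reduce
      rw [lintegral_const_mul _ hf, Rop]
      ring
    have hFmeas : Measurable (Function.uncurry fun s u =>
        (ENNReal.ofReal (phi n α s) * L s ^ j) * f u) :=
      ((((phi_meas n α).comp measurable_fst).ennreal_ofReal).mul
        ((hLmeas.comp measurable_fst).pow_const j)).mul (hf.comp measurable_snd)
    have stepB := swap_Ioo ht (fun s u => (ENNReal.ofReal (phi n α s) * L s ^ j) * f u) hFmeas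
    have stepC : ∫⁻ u in Ioo 0 t, ∫⁻ s in Ioo u t,
          (ENNReal.ofReal (phi n α s) * L s ^ j) * f u
        = ∫⁻ u in Ioo 0 t, (((j + 1 : ℕ) : ℝ≥0∞))⁻¹ * (f u * L u ^ (j + 1)) := by
      refine setLIntegral_congr_fun measurableSet_Ioo ?_
      intro u hu
      beta_reduce
      rw [lintegral_mul_const _ hgmeas, key_lint n α j hu.1 hu.2]
      ring
    rw [stepA, stepB, stepC, lintegral_const_mul' _ _ (ENNReal.inv_ne_top.2 (by simp))]
    rw [show ENNReal.ofReal (phi n β t) * ((j.factorial : ℝ≥0∞))⁻¹ *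
        ((((j + 1 : ℕ) : ℝ≥0∞))⁻¹ * ∫⁻ s in Ioo 0 t, f s * L s ^ (j + 1))
      = ENNReal.ofReal (phi n β t) *
          (((j.factorial : ℝ≥0∞))⁻¹ * (((j + 1 : ℕ) : ℝ≥0∞))⁻¹) *
          ∫⁻ s in Ioo 0 t, f s * L s ^ (j + 1) by ring, fact_inv_succ]

lemma Hrec (n : ℕ) (α β : ℝ) (f : ℝ → ℝ≥0∞) (hf : Measurable f) (j : ℕ) :
    ∀ t : ℝ, 0 < t →
    (Hop n α)^[j] (Hop n β f) t
      = ((j.factorial : ℝ≥0∞))⁻¹ *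
        ∫⁻ s in Ioi t, f s * ENNReal.ofReal (phi n β s) *
          (∫⁻ x in Ioo t s, ENNReal.ofReal (phi n α x)) ^ j := by
  induction j with
  | zero =>
    intro t ht
    simp [Hop]
  | succ j ih =>
    intro t ht
    rw [Function.iterate_succ_apply']
    show (∫⁻ s in Ioi t, ((Hop n α)^[j] (Hop n β f)) s * ENNReal.ofReal (phi n α s)) = _
    have hfac : ((j.factorial : ℝ≥0∞))⁻¹ ≠ ⊤ :=
      ENNReal.inv_ne_top.2 (Nat.cast_ne_zero.2 j.factorial_ne_zero)
    have stepA : (∫⁻ s in Ioi t, ((Hop n α)^[j] (Hop n β f)) s * ENNReal.ofReal (phi n α s))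
        = ∫⁻ s in Ioi t, ∫⁻ u in Ioi s,
            ((j.factorial : ℝ≥0∞))⁻¹ * ENNReal.ofReal (phi n α s) *
              (f u * ENNReal.ofReal (phi n β u) *
                (∫⁻ x in Ioo s u, ENNReal.ofReal (phi n α x)) ^ j) := by
      refine setLIntegral_congr_fun measurableSet_Ioi ?_
      intro s hs
      beta_reduce
      rw [ih s (ht.trans hs),
        lintegral_const_mul' (((j.factorial : ℝ≥0∞))⁻¹ * ENNReal.ofReal (phi n α s)) _
          (ENNReal.mul_ne_top hfac ENNReal.ofReal_ne_top)]
      ring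
    have hFmeas : Measurable (Function.uncurry fun s u =>
        ((j.factorial : ℝ≥0∞))⁻¹ * ENNReal.ofReal (phi n α s) *
          (f u * ENNReal.ofReal (phi n β u) *
            (∫⁻ x in Ioo s u, ENNReal.ofReal (phi n α x)) ^ j)) := by
      exact (measurable_const.mul
          (((phi_meas n α).comp measurable_fst).ennreal_ofReal)).mul
        (((hf.comp measurable_snd).mul
            (((phi_meas n β).comp measurable_snd).ennreal_ofReal)).mul
          ((L_meas2 n α).pow_const j))
    have stepB := swap_Ioi (fun s u =>
      ((j.factorial : ℝ≥0∞))⁻¹ * ENNReal.ofReal (phi n α s) *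
        (f u * ENNReal.ofReal (phi n β u) *
          (∫⁻ x in Ioo s u, ENNReal.ofReal (phi n α x)) ^ j)) hFmeas (t := t)
    have stepC : (∫⁻ u in Ioi t, ∫⁻ s in Ioo t u,
          ((j.factorial : ℝ≥0∞))⁻¹ * ENNReal.ofReal (phi n α s) *
            (f u * ENNReal.ofReal (phi n β u) *
              (∫⁻ x in Ioo s u, ENNReal.ofReal (phi n α x)) ^ j))
        = ∫⁻ u in Ioi t, (((j + 1).factorial : ℝ≥0∞))⁻¹ *
            (f u * ENNReal.ofReal (phi n β u) *
              (∫⁻ x in Ioo t u, ENNReal.ofReal (phi n α x)) ^ (j + 1)) := by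
      refine setLIntegral_congr_fun measurableSet_Ioi ?_
      intro u hu
      beta_reduce
      have hrw : ∀ s : ℝ,
          ((j.factorial : ℝ≥0∞))⁻¹ * ENNReal.ofReal (phi n α s) *
            (f u * ENNReal.ofReal (phi n β u) *
              (∫⁻ x in Ioo s u, ENNReal.ofReal (phi n α x)) ^ j)
          = ((j.factorial : ℝ≥0∞))⁻¹ * (f u * ENNReal.ofReal (phi n β u)) *
            (ENNReal.ofReal (phi n α s) *
              (∫⁻ x in Ioo s u, ENNReal.ofReal (phi n α x)) ^ j) := by
        intro s; ring
      simp only [hrw]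
      rw [lintegral_const_mul (f := fun s => ENNReal.ofReal (phi n α s) *
          (∫⁻ x in Ioo s u, ENNReal.ofReal (phi n α x)) ^ j) _ (((phi_meas n α).ennreal_ofReal).mul
          ((L_measL n α u).pow_const j)),
        key_lint n α j ht hu, ← fact_inv_succ j]
      ring
    rw [stepA, stepB, stepC,
      lintegral_const_mul' _ _
        (ENNReal.inv_ne_top.2 (Nat.cast_ne_zero.2 (j + 1).factorial_ne_zero))]

theorem stmt5 (n : ℕ) (hn : 2 ≤ n) (α β : ℝ)
    (hα0 : 0 ≤ α) (hαn : α < n) (hβ0 : 0 ≤ β) (hβn : β < n)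
    (j : ℕ) (f : ℝ → ℝ≥0∞) (hf : Measurable f) (t : ℝ) (ht : 0 < t) :
    Rop n β ((Rop n α)^[j] f) t =
      ENNReal.ofReal (phi n β t / (Nat.factorial j : ℝ)) *
        (∫⁻ s in Ioo (0 : ℝ) t,
          f s * ENNReal.ofReal ((∫ x in Ioo s t, phi n α x) ^ j)) ∧
    (Hop n α)^[j] (Hop n β f) t =
      ENNReal.ofReal ((Nat.factorial j : ℝ)⁻¹) *
        ∫⁻ s in Ioi t,
          f s * ENNReal.ofReal (phi n β s * (∫ x in Ioo t s, phi n α x) ^ j) := by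
  have hfacpos : (0 : ℝ) < (j.factorial : ℝ) := by
    exact_mod_cast j.factorial_pos
  have hinv : ENNReal.ofReal ((j.factorial : ℝ)⁻¹) = ((j.factorial : ℝ≥0∞))⁻¹ := by
    rw [ENNReal.ofReal_inv_of_pos hfacpos, ENNReal.ofReal_natCast]
  constructor
  · rw [Rrec n α β j f hf t ht]
    have hc : ENNReal.ofReal (phi n β t / (j.factorial : ℝ))
        = ENNReal.ofReal (phi n β t) * ((j.factorial : ℝ≥0∞))⁻¹ := by
      rw [div_eq_mul_inv, ENNReal.ofReal_mul (phi_nonneg n β ht), hinv]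
    rw [hc]
    congr 1
    refine setLIntegral_congr_fun measurableSet_Ioo ?_
    intro s hs
    beta_reduce
    rw [Lconv n α t hs.1, ← ENNReal.ofReal_pow (intOo_nonneg n α t hs.1)]
  · rw [Hrec n α β f hf j t ht, hinv]
    congr 1
    refine setLIntegral_congr_fun measurableSet_Ioi ?_
    intro s hs
    beta_reduce
    rw [ENNReal.ofReal_mul (phi_nonneg n β (ht.trans hs)),
      ENNReal.ofReal_pow (intOo_nonneg n α s ht), ← Lconv n α s ht, mul_assoc]
end

section
/- For every nonincreasing nonnegative f on (0,∞) and every t ∈ (0,1): c·R_m f(t) ≤ (R_β ∘ R_2^k) f(t) ≤ C·R_m f(t), where m = 2k + β, k ∈ ℕ₀, β ∈ {1,2}, m < n, with constants c, C depending only on n and m. -/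
open MeasureTheory Set Real
open scoped ENNReal

lemma setLint_mono'' {t : ℝ} {f g : ℝ → ℝ≥0∞} (h : ∀ s ∈ Ioo (0:ℝ) t, f s ≤ g s) :
    ∫⁻ s in Ioo (0:ℝ) t, f s ≤ ∫⁻ s in Ioo (0:ℝ) t, g s :=
  lintegral_mono_ae ((ae_restrict_iff' measurableSet_Ioo).2 (ae_of_all _ h))

lemma phi_eq {n : ℕ} {γ t : ℝ} (hγ : 0 ≤ γ) (ht : t ∈ Ioo (0:ℝ) 1) :
    phi n γ t = t ^ (-1 + γ / n) := by
  have h : t ^ (-1 + γ / n) ≤ t⁻¹ := by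
    rw [← Real.rpow_neg_one t]
    exact Real.rpow_le_rpow_of_exponent_ge ht.1 ht.2.le
      (by have : 0 ≤ γ / n := div_nonneg hγ (Nat.cast_nonneg n); linarith)
  simpa [phi] using min_eq_left h

lemma lint_rpow {a t : ℝ} (ha : -1 < a) (ht : 0 < t) :
    ∫⁻ s in Ioo (0:ℝ) t, ENNReal.ofReal (s ^ a) = ENNReal.ofReal (t ^ (a+1) / (a+1)) := by
  rw [show (volume.restrict (Ioo (0:ℝ) t)) = volume.restrict (Ioc 0 t) from
    Measure.restrict_congr_set Ioo_ae_eq_Ioc]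
  have hint : IntegrableOn (fun s : ℝ => s ^ a) (Ioc 0 t) :=
    (intervalIntegrable_iff_integrableOn_Ioc_of_le ht.le).mp
      (intervalIntegral.intervalIntegrable_rpow' ha)
  rw [← ofReal_integral_eq_lintegral_ofReal hint ?_]
  · congr 1
    rw [← intervalIntegral.integral_of_le ht.le, integral_rpow (Or.inl ha),
      Real.zero_rpow (by linarith), sub_zero]
  · filter_upwards [ae_restrict_mem measurableSet_Ioc] with x hx
    exact Real.rpow_nonneg hx.1.le _

lemma avg_lb {f : ℝ → ℝ≥0∞} (hf : AntitoneOn f (Ioi 0)) {s t : ℝ} (hs : 0 < s) (hst : s ≤ t) :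
    ENNReal.ofReal (s / t) * ∫⁻ x in Ioo (0:ℝ) t, f x ≤ ∫⁻ x in Ioo (0:ℝ) s, f x := by
  have ht : 0 < t := lt_of_lt_of_le hs hst
  have hs' : s ≠ 0 := hs.ne'
  have ht' : t ≠ 0 := ht.ne'
  have hts : 0 ≤ (t - s)/s := div_nonneg (by linarith) hs.le
  have hdisj : Disjoint (Ioo (0:ℝ) s) (Ico s t) :=
    Set.disjoint_left.2 fun x hx hx' => absurd hx.2 (not_lt.2 hx'.1)
  have hsplit : (∫⁻ x in Ioo (0:ℝ) t, f x)
      = (∫⁻ x in Ioo (0:ℝ) s, f x) + ∫⁻ x in Ico s t, f x := by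
    rw [← lintegral_union measurableSet_Ico hdisj, Ioo_union_Ico_eq_Ioo hs hst]
  have h1 : ∫⁻ x in Ico s t, f x ≤ ENNReal.ofReal (t - s) * f s := by
    calc ∫⁻ x in Ico s t, f x ≤ ∫⁻ _ in Ico s t, f s :=
          lintegral_mono_ae ((ae_restrict_iff' measurableSet_Ico).2 (ae_of_all _
            fun x hx => hf (mem_Ioi.2 hs) (mem_Ioi.2 (lt_of_lt_of_le hs hx.1)) hx.1))
      _ = f s * volume (Ico s t) := setLIntegral_const _ _
      _ = ENNReal.ofReal (t - s) * f s := by rw [Real.volume_Ico]; ring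
  have h2 : ENNReal.ofReal s * f s ≤ ∫⁻ x in Ioo (0:ℝ) s, f x := by
    calc ENNReal.ofReal s * f s = f s * volume (Ioo (0:ℝ) s) := by
          rw [Real.volume_Ioo, sub_zero]; ring
      _ = ∫⁻ _ in Ioo (0:ℝ) s, f s := (setLIntegral_const _ _).symm
      _ ≤ ∫⁻ x in Ioo (0:ℝ) s, f x :=
          setLint_mono'' fun x hx => hf (mem_Ioi.2 hx.1) (mem_Ioi.2 hs) hx.2.le
  have h3 : ENNReal.ofReal (t - s) * f s
      ≤ ENNReal.ofReal ((t - s)/s) * ∫⁻ x in Ioo (0:ℝ) s, f x := by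
    calc ENNReal.ofReal (t - s) * f s
        = ENNReal.ofReal ((t-s)/s) * (ENNReal.ofReal s * f s) := by
          rw [← mul_assoc, ← ENNReal.ofReal_mul hts]
          congr 2
          field_simp
      _ ≤ _ := mul_le_mul_right h2 _
  have h4 : (∫⁻ x in Ioo (0:ℝ) t, f x)
      ≤ ENNReal.ofReal (t/s) * ∫⁻ x in Ioo (0:ℝ) s, f x := by
    rw [hsplit]
    have key : (1 : ℝ≥0∞) + ENNReal.ofReal ((t-s)/s) = ENNReal.ofReal (t/s) := by
      rw [← ENNReal.ofReal_one, ← ENNReal.ofReal_add (by norm_num) hts]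
      congr 1
      field_simp
      ring
    calc (∫⁻ x in Ioo (0:ℝ) s, f x) + ∫⁻ x in Ico s t, f x
        ≤ (∫⁻ x in Ioo (0:ℝ) s, f x)
            + ENNReal.ofReal ((t-s)/s) * ∫⁻ x in Ioo (0:ℝ) s, f x :=
          add_le_add le_rfl (h1.trans h3)
      _ = (1 + ENNReal.ofReal ((t-s)/s)) * ∫⁻ x in Ioo (0:ℝ) s, f x := by
          rw [add_mul, one_mul]
      _ = ENNReal.ofReal (t/s) * ∫⁻ x in Ioo (0:ℝ) s, f x := by rw [key]
  calc ENNReal.ofReal (s/t) * ∫⁻ x in Ioo (0:ℝ) t, f x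
      ≤ ENNReal.ofReal (s/t) * (ENNReal.ofReal (t/s) * ∫⁻ x in Ioo (0:ℝ) s, f x) :=
        mul_le_mul_right h4 _
    _ = ∫⁻ x in Ioo (0:ℝ) s, f x := by
        rw [← mul_assoc, ← ENNReal.ofReal_mul (div_nonneg hs.le ht.le),
          show s/t*(t/s) = 1 by field_simp]
        simp

lemma key_lemma (n : ℕ) (hn : 2 ≤ n) (j : ℕ) :
    ∃ c C : ℝ, 0 < c ∧ 0 < C ∧ ∀ f : ℝ → ℝ≥0∞, AntitoneOn f (Ioi 0) →
      ∀ t ∈ Ioo (0:ℝ) 1,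
        ENNReal.ofReal (c * t ^ (2*j/n : ℝ)) * (∫⁻ s in Ioo (0:ℝ) t, f s)
            ≤ (∫⁻ s in Ioo (0:ℝ) t, ((Rop n 2)^[j] f) s) ∧
        (∫⁻ s in Ioo (0:ℝ) t, ((Rop n 2)^[j] f) s)
            ≤ ENNReal.ofReal (C * t ^ (2*j/n : ℝ)) * ∫⁻ s in Ioo (0:ℝ) t, f s := by
  have hn0 : (0:ℝ) < n := by
    have : (2:ℝ) ≤ n := by exact_mod_cast hn
    linarith
  have hn' : (n:ℝ) ≠ 0 := hn0.ne'
  induction j with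
  | zero =>
    refine ⟨1, 1, one_pos, one_pos, fun f hf t ht => ?_⟩
    simp
  | succ j ih =>
    obtain ⟨c, C, hc, hC, H⟩ := ih
    set e : ℝ := 2*((j:ℝ)+1)/n with he
    have he0 : 0 < e := by positivity
    have hexp : (-1 + 2/(n:ℝ)) + 2*(j:ℝ)/n = e - 1 := by
      rw [he]
      field_simp
      ring
    refine ⟨c/(e+1), C/e, by positivity, by positivity, fun f hf t ht => ?_⟩
    have ht0 : 0 < t := ht.1
    have ht0' : t ≠ 0 := ht0.ne'
    have hcast : 2*((j:ℕ)+1:ℕ)/(n:ℝ) = e := by push_cast [he]; ring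
    have hiter : ∀ s : ℝ, ((Rop n 2)^[j+1] f) s = Rop n 2 ((Rop n 2)^[j] f) s := by
      intro s
      rw [Function.iterate_succ_apply']
    set g := (Rop n 2)^[j] f with hg
    set F : ℝ → ℝ≥0∞ := fun u => ∫⁻ x in Ioo (0:ℝ) u, f x with hF
    set G : ℝ → ℝ≥0∞ := fun u => ∫⁻ x in Ioo (0:ℝ) u, g x with hG
    have hFmono : ∀ {u v : ℝ}, u ≤ v → F u ≤ F v := by
      intro u v huv
      exact lintegral_mono_set (Ioo_subset_Ioo le_rfl huv)
    have hte : t ^ (e+1) = t ^ e * t := by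
      rw [Real.rpow_add ht0, Real.rpow_one]
    constructor
    · -- lower bound
      have hpt : ∀ s ∈ Ioo (0:ℝ) t,
          ENNReal.ofReal (s ^ e) * (ENNReal.ofReal (c/t) * F t)
            ≤ ((Rop n 2)^[j+1] f) s := by
        intro s hs
        have hs0 : 0 < s := hs.1
        have hs1 : s ∈ Ioo (0:ℝ) 1 := ⟨hs.1, hs.2.trans ht.2⟩
        rw [hiter s, Rop, phi_eq (by norm_num) hs1]
        have h1 : ENNReal.ofReal (c * s ^ (2*(j:ℝ)/n)) * F s ≤ G s := (H f hf s hs1).1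
        have h2 : ENNReal.ofReal (s/t) * F t ≤ F s := avg_lb hf hs0 hs.2.le
        have hse : s ^ e = s ^ (-1 + 2/(n:ℝ)) * s ^ (2*(j:ℝ)/n) * s := by
          rw [show e = ((-1 + 2/(n:ℝ)) + 2*(j:ℝ)/n) + 1 by rw [hexp]; ring,
            Real.rpow_add hs0, Real.rpow_add hs0, Real.rpow_one]
        have hA : ENNReal.ofReal (s ^ e) * ENNReal.ofReal (c/t)
            = ENNReal.ofReal (s ^ (-1 + 2/(n:ℝ)))
                * (ENNReal.ofReal (c * s ^ (2*(j:ℝ)/n)) * ENNReal.ofReal (s/t)) := by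
          rw [← ENNReal.ofReal_mul (mul_nonneg hc.le (Real.rpow_nonneg hs0.le _)),
            ← ENNReal.ofReal_mul (Real.rpow_nonneg hs0.le _),
            ← ENNReal.ofReal_mul (Real.rpow_nonneg hs0.le _)]
          congr 1
          rw [hse]
          field_simp
        calc ENNReal.ofReal (s ^ e) * (ENNReal.ofReal (c/t) * F t)
            = ENNReal.ofReal (s ^ (-1 + 2/(n:ℝ)))
                * (ENNReal.ofReal (c * s ^ (2*(j:ℝ)/n)) * (ENNReal.ofReal (s/t) * F t)) := by
              rw [← mul_assoc, hA]
              ring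
          _ ≤ ENNReal.ofReal (s ^ (-1 + 2/(n:ℝ)))
                * (ENNReal.ofReal (c * s ^ (2*(j:ℝ)/n)) * F s) :=
              mul_le_mul_right (mul_le_mul_right h2 _) _
          _ ≤ ENNReal.ofReal (s ^ (-1 + 2/(n:ℝ))) * G s := mul_le_mul_right h1 _
      calc ENNReal.ofReal (c/(e+1) * t ^ (2*((j:ℕ)+1:ℕ)/(n:ℝ))) * F t
          = ENNReal.ofReal (t ^ (e+1) / (e+1)) * (ENNReal.ofReal (c/t) * F t) := by
            rw [← mul_assoc,
              ← ENNReal.ofReal_mul (div_nonneg (Real.rpow_nonneg ht0.le _) (by linarith)),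
              hcast]
            congr 2
            rw [hte]
            field_simp
        _ = (∫⁻ s in Ioo (0:ℝ) t, ENNReal.ofReal (s ^ e)) * (ENNReal.ofReal (c/t) * F t) := by
            rw [lint_rpow (by linarith) ht0]
        _ = ∫⁻ s in Ioo (0:ℝ) t, ENNReal.ofReal (s ^ e) * (ENNReal.ofReal (c/t) * F t) := by
            rw [lintegral_mul_const _ (by fun_prop)]
        _ ≤ ∫⁻ s in Ioo (0:ℝ) t, ((Rop n 2)^[j+1] f) s := setLint_mono'' hpt
    · -- upper bound
      have hpt : ∀ s ∈ Ioo (0:ℝ) t,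
          ((Rop n 2)^[j+1] f) s
            ≤ ENNReal.ofReal (s ^ (e-1)) * (ENNReal.ofReal C * F t) := by
        intro s hs
        have hs0 : 0 < s := hs.1
        have hs1 : s ∈ Ioo (0:ℝ) 1 := ⟨hs.1, hs.2.trans ht.2⟩
        rw [hiter s, Rop, phi_eq (by norm_num) hs1]
        have h1 : G s ≤ ENNReal.ofReal (C * s ^ (2*(j:ℝ)/n)) * F s := (H f hf s hs1).2
        have h2 : F s ≤ F t := hFmono hs.2.le
        have hse : s ^ (e-1) = s ^ (-1 + 2/(n:ℝ)) * s ^ (2*(j:ℝ)/n) := by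
          rw [← hexp, Real.rpow_add hs0]
        calc ENNReal.ofReal (s ^ (-1 + 2/(n:ℝ))) * G s
            ≤ ENNReal.ofReal (s ^ (-1 + 2/(n:ℝ)))
                * (ENNReal.ofReal (C * s ^ (2*(j:ℝ)/n)) * F t) :=
              mul_le_mul_right (h1.trans (mul_le_mul_right h2 _)) _
          _ = ENNReal.ofReal (s ^ (e-1)) * (ENNReal.ofReal C * F t) := by
              rw [← mul_assoc, ← mul_assoc,
                ← ENNReal.ofReal_mul (Real.rpow_nonneg hs0.le _),
                ← ENNReal.ofReal_mul (Real.rpow_nonneg hs0.le _)]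
              congr 2
              rw [hse]
              ring
      calc ∫⁻ s in Ioo (0:ℝ) t, ((Rop n 2)^[j+1] f) s
          ≤ ∫⁻ s in Ioo (0:ℝ) t, ENNReal.ofReal (s ^ (e-1)) * (ENNReal.ofReal C * F t) :=
            setLint_mono'' hpt
        _ = (∫⁻ s in Ioo (0:ℝ) t, ENNReal.ofReal (s ^ (e-1))) * (ENNReal.ofReal C * F t) := by
            rw [lintegral_mul_const _ (by fun_prop)]
        _ = ENNReal.ofReal (C/e * t ^ (2*((j:ℕ)+1:ℕ)/(n:ℝ))) * F t := by
            rw [lint_rpow (by linarith) ht0, show e - 1 + 1 = e by ring, ← mul_assoc,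
              ← ENNReal.ofReal_mul (div_nonneg (Real.rpow_nonneg ht0.le _) he0.le),
              hcast]
            congr 2
            field_simp

theorem stmt16 (n : ℕ) (hn : 2 ≤ n) (k : ℕ) (β : ℝ) (hβ : β = 1 ∨ β = 2)
    (m : ℝ) (hm : m = 2 * k + β) (hmn : m < n) :
    ∃ c C : ℝ, 0 < c ∧ 0 < C ∧
      ∀ f : ℝ → ℝ≥0∞, Measurable f → AntitoneOn f (Ioi 0) →
        ∀ t ∈ Ioo (0 : ℝ) 1,
          ENNReal.ofReal c * Rop n m f t ≤ Rop n β ((Rop n 2)^[k] f) t ∧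
            Rop n β ((Rop n 2)^[k] f) t ≤ ENNReal.ofReal C * Rop n m f t := by
  obtain ⟨c, C, hc, hC, H⟩ := key_lemma n hn k
  have hβ0 : (0:ℝ) ≤ β := by rcases hβ with h | h <;> rw [h] <;> norm_num
  have hm0 : (0:ℝ) ≤ m := by rw [hm]; positivity
  refine ⟨c, C, hc, hC, fun f hfm hf t ht => ?_⟩
  have ht0 : 0 < t := ht.1
  have hn0 : (0:ℝ) < n := by
    have : (2:ℝ) ≤ n := by exact_mod_cast hn
    linarith
  have hexp : -1 + m/(n:ℝ) = (-1 + β/(n:ℝ)) + 2*(k:ℝ)/n := by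
    rw [hm]
    field_simp
    ring
  have hte : t ^ (-1 + m/(n:ℝ)) = t ^ (-1 + β/(n:ℝ)) * t ^ (2*(k:ℝ)/n) := by
    rw [hexp, Real.rpow_add ht0]
  obtain ⟨h1, h2⟩ := H f hf t ht
  rw [Rop, Rop, phi_eq hβ0 ht, phi_eq hm0 ht]
  constructor
  · calc ENNReal.ofReal c * (ENNReal.ofReal (t ^ (-1 + m/(n:ℝ))) * ∫⁻ s in Ioo (0:ℝ) t, f s)
        = ENNReal.ofReal (t ^ (-1 + β/(n:ℝ)))
            * (ENNReal.ofReal (c * t ^ (2*(k:ℝ)/n)) * ∫⁻ s in Ioo (0:ℝ) t, f s) := by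
          rw [← mul_assoc, ← mul_assoc,
            ← ENNReal.ofReal_mul hc.le,
            ← ENNReal.ofReal_mul (Real.rpow_nonneg ht0.le _)]
          congr 2
          rw [hte]
          ring
      _ ≤ ENNReal.ofReal (t ^ (-1 + β/(n:ℝ))) * ∫⁻ s in Ioo (0:ℝ) t, ((Rop n 2)^[k] f) s :=
          mul_le_mul_right h1 _
  · calc ENNReal.ofReal (t ^ (-1 + β/(n:ℝ))) * ∫⁻ s in Ioo (0:ℝ) t, ((Rop n 2)^[k] f) s
        ≤ ENNReal.ofReal (t ^ (-1 + β/(n:ℝ)))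
            * (ENNReal.ofReal (C * t ^ (2*(k:ℝ)/n)) * ∫⁻ s in Ioo (0:ℝ) t, f s) :=
          mul_le_mul_right h2 _
      _ = ENNReal.ofReal C * (ENNReal.ofReal (t ^ (-1 + m/(n:ℝ))) * ∫⁻ s in Ioo (0:ℝ) t, f s) := by
          rw [← mul_assoc, ← mul_assoc,
            ← ENNReal.ofReal_mul (Real.rpow_nonneg ht0.le _),
            ← ENNReal.ofReal_mul hC.le]
          congr 2
          rw [hte]
          ring
end
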